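/- For −1 ≤ α, β ≤ 1 with |α| ≥ |β| and α ≠ 0, the 4×4 matrix Π₊(α,β) = (1/4)·[[1+t, α, β, (1+t)β/α],[α, 1−t, (1−t)β/α, β],[β, (1−t)β/α, 1−t, α],[(1+t)β/α, β, α, 1+t]] with t = √(1−α²) is positive semidefinite, has trace 1, and its partial trace over the second tensor factor equals (1/2)[[1,β],[β,1]] while its partial trace over the first factor equals (1/2)[[1,α],[α,1]]. -/

import Mathlib

open Matrix
open scoped ComplexOrder

noncomputable section

/-- Partial trace over the second tensor factor of `M₄(ℂ) ≅ M₂(ℂ) ⊗ M₂(ℂ)`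
(index ordering `(i,k) ↦ 2*i + k`). -/
def ptrace2 (A : Matrix (Fin 4) (Fin 4) ℂ) : Matrix (Fin 2) (Fin 2) ℂ :=
  !![A 0 0 + A 1 1, A 0 2 + A 1 3; A 2 0 + A 3 1, A 2 2 + A 3 3]

/-- Partial trace over the first tensor factor. -/
def ptrace1 (A : Matrix (Fin 4) (Fin 4) ℂ) : Matrix (Fin 2) (Fin 2) ℂ :=
  !![A 0 0 + A 2 2, A 0 1 + A 2 3; A 1 0 + A 3 2, A 1 1 + A 3 3]

/-- Kronecker product `M₂(ℂ) × M₂(ℂ) → M₄(ℂ)` with index ordering `(i,k) ↦ 2*i + k`. -/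
def kron (A B : Matrix (Fin 2) (Fin 2) ℂ) : Matrix (Fin 4) (Fin 4) ℂ :=
  !![A 0 0 * B 0 0, A 0 0 * B 0 1, A 0 1 * B 0 0, A 0 1 * B 0 1;
     A 0 0 * B 1 0, A 0 0 * B 1 1, A 0 1 * B 1 0, A 0 1 * B 1 1;
     A 1 0 * B 0 0, A 1 0 * B 0 1, A 1 1 * B 0 0, A 1 1 * B 0 1;
     A 1 0 * B 1 0, A 1 0 * B 1 1, A 1 1 * B 1 0, A 1 1 * B 1 1]

def σx : Matrix (Fin 2) (Fin 2) ℂ := !![0, 1; 1, 0]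
def σy : Matrix (Fin 2) (Fin 2) ℂ := !![0, -Complex.I; Complex.I, 0]
def σz : Matrix (Fin 2) (Fin 2) ℂ := !![1, 0; 0, -1]

/-- The symmetric cost operator `C_{symm,p}`. -/
def Csymm (p : ℝ) : Matrix (Fin 4) (Fin 4) ℂ :=
  !![(((2:ℝ)^p : ℝ) : ℂ), 0, 0, -(((2:ℝ)^p : ℝ) : ℂ);
     0, (((2:ℝ)^(p+1) : ℝ) : ℂ), 0, 0;
     0, 0, (((2:ℝ)^(p+1) : ℝ) : ℂ), 0;
     -(((2:ℝ)^p : ℝ) : ℂ), 0, 0, (((2:ℝ)^p : ℝ) : ℂ)]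

/-- The single-observable cost operator `C_{z,p} = diag(0, 2^p, 2^p, 0)`. -/
def Cz (p : ℝ) : Matrix (Fin 4) (Fin 4) ℂ :=
  !![0, 0, 0, 0;
     0, (((2:ℝ)^p : ℝ) : ℂ), 0, 0;
     0, 0, (((2:ℝ)^p : ℝ) : ℂ), 0;
     0, 0, 0, 0]

set_option maxHeartbeats 1600000 in
set_option linter.unreachableTactic false in
set_option linter.unusedTactic false in
/-- the explicit matrix `Π₊(α,β)` (with `t = √(1−α²)`) is a coupling of
`ρ(α) = (1/2)(I + ασ_x)` and `ρ(β)`, provided `|α| ≥ |β|` and `α ≠ 0`. -/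
theorem stmt_8 (α β : ℝ) (hα₁ : -1 ≤ α) (hα₂ : α ≤ 1) (hβ₁ : -1 ≤ β) (hβ₂ : β ≤ 1)
    (hαβ : |β| ≤ |α|) (hα0 : α ≠ 0)
    (t : ℝ) (ht : t = Real.sqrt (1 - α^2))
    (P : Matrix (Fin 4) (Fin 4) ℂ)
    (hP : P = (1/4 : ℂ) •
      !![((1 + t : ℝ) : ℂ), (α : ℂ), (β : ℂ), (((1 + t) * β / α : ℝ) : ℂ);
         (α : ℂ), ((1 - t : ℝ) : ℂ), (((1 - t) * β / α : ℝ) : ℂ), (β : ℂ);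
         (β : ℂ), (((1 - t) * β / α : ℝ) : ℂ), ((1 - t : ℝ) : ℂ), (α : ℂ);
         (((1 + t) * β / α : ℝ) : ℂ), (β : ℂ), (α : ℂ), ((1 + t : ℝ) : ℂ)]) :
    P.PosSemidef ∧ P.trace = 1 ∧
    ptrace2 P = (1/2 : ℂ) • !![1, (β : ℂ); (β : ℂ), 1] ∧
    ptrace1 P = (1/2 : ℂ) • !![1, (α : ℂ); (α : ℂ), 1] := by
  have hα2 : α^2 ≤ 1 := by nlinarith
  have ht0 : 0 ≤ t := ht ▸ Real.sqrt_nonneg _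
  have ht2 : t^2 = 1 - α^2 := by rw [ht]; exact Real.sq_sqrt (by linarith)
  set a : ℝ := Real.sqrt (1 + t) with ha
  have ha2 : a^2 = 1 + t := Real.sq_sqrt (by linarith)
  have ha0 : 0 < a := Real.sqrt_pos.mpr (by linarith)
  have ha0' : a ≠ 0 := ne_of_gt ha0
  have hβα : β^2 ≤ α^2 := by nlinarith [sq_abs α, sq_abs β, abs_nonneg β]
  set s : ℝ := Real.sqrt (α^2 - β^2) with hs
  have hs2 : s^2 = α^2 - β^2 := Real.sq_sqrt (by linarith)
  have ha2C : (a:ℂ)^2 = 1 + (t:ℂ) := by exact_mod_cast ha2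
  have ht2C : (t:ℂ)^2 = 1 - (α:ℂ)^2 := by exact_mod_cast ht2
  have hs2C : (s:ℂ)^2 = (α:ℂ)^2 - (β:ℂ)^2 := by exact_mod_cast hs2
  set B : Matrix (Fin 2) (Fin 4) ℂ :=
    !![((a/2:ℝ):ℂ), ((α/(2*a):ℝ):ℂ), ((β/(2*a):ℝ):ℂ), ((a*β/(2*α):ℝ):ℂ);
       0, 0, ((s/(2*a):ℝ):ℂ), ((s*a/(2*α):ℝ):ℂ)] with hB
  have hPB : P = Bᴴ * B := by
    rw [hP, hB]
    ext i j
    fin_cases i <;> fin_cases j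
    all_goals
      simp [Matrix.mul_apply, Fin.sum_univ_two, Complex.conj_ofReal, map_ofNat]
      norm_cast
      try field_simp
      try norm_cast
      try push_cast
      try field_simp
      first
      | nlinarith [ht2, ha2, hs2, sq_nonneg a, sq_nonneg s]
      | linear_combination (-4*β*α) * ha2
      | linear_combination (4*β*α) * ha2
      | linear_combination (4*(1-t)*β)*ha2 - 4*β*ht2
      | linear_combination (-(4*(1-t)*β))*ha2 + 4*β*ht2
      | linear_combination (-4*a)*hs2
      | linear_combination (4*a)*hs2
      | linear_combination (-4:ℂ)*ha2C
      | linear_combination (-4*(β:ℂ))*ha2C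
      | linear_combination (4*(1-(t:ℂ)))*ha2C - 4*ht2C
      | linear_combination (4*(β:ℂ)*(1-(t:ℂ)))*ha2C - 4*(β:ℂ)*ht2C
      | linear_combination (4*(1-(t:ℂ)))*ha2C - 4*ht2C - 4*hs2C
      | linear_combination (-4:ℂ)*hs2C
      | linear_combination (-4*(α:ℂ)^2)*ha2C - 4*(a:ℂ)^2*hs2C
      | linear_combination (4*(α:ℂ)^2)*ha2C + 4*(a:ℂ)^2*hs2C
      | ring
  refine ⟨hPB ▸ Matrix.posSemidef_conjTranspose_mul_self B, ?_, ?_, ?_⟩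
  · rw [hP]
    simp [Matrix.trace, Fin.sum_univ_four]
    push_cast
    ring
  · rw [hP]
    ext i j
    fin_cases i <;> fin_cases j <;>
      · simp [ptrace2]
        push_cast
        ring
  · rw [hP]
    ext i j
    fin_cases i <;> fin_cases j <;>
      · simp [ptrace1]
        push_cast
        ring
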